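/- An infinite simple group is not isomorphic to any finitely generated linear group over a field. -/

import Mathlib

instance : IsJacobsonRing ℤ := by
  rw [isJacobsonRing_iff_prime_eq]
  intro P hP
  by_cases hbot : P = ⊥
  · subst hbot
    refine le_antisymm ?_ Ideal.le_jacobson
    intro x hx
    rw [Ideal.mem_jacobson_bot] at hx
    have h := hx x
    rw [Int.isUnit_iff] at h
    have hx0 : x = 0 := by rcases h with h | h <;> nlinarith [sq_nonneg x]
    simp [hx0]
  · haveI := IsPrime.to_maximal_ideal hbot
    exact Ideal.jacobson_eq_self_of_isMaximal

lemma finite_of_field_moduleFinite (F : Type*) [Field F] [Module.Finite ℤ F] :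
    Finite F := by
  have hint : Algebra.IsIntegral ℤ F := Algebra.IsIntegral.of_finite ℤ F
  rcases CharP.char_is_prime_or_zero F (ringChar F) with hp | h0
  · haveI : CharP F (ringChar F) := ringChar.charP F
    apply Module.finite_of_fg_torsion
    intro x
    refine ⟨⟨(ringChar F : ℤ), mem_nonZeroDivisors_of_ne_zero (by exact_mod_cast hp.ne_zero)⟩, ?_⟩
    have : ((ringChar F : ℤ) : F) = 0 := by
      push_cast
      exact CharP.cast_eq_zero F (ringChar F)
    simp [Submonoid.smul_def, zsmul_eq_mul, this]
  · haveI : CharP F 0 := h0 ▸ ringChar.charP F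
    haveI : CharZero F := CharP.charP_to_charZero F
    have h2 : IsIntegral ℤ ((algebraMap ℚ F) (1 / 2 : ℚ)) := hint.isIntegral _
    have h3 : IsIntegral ℤ (1 / 2 : ℚ) := IsIntegral.tower_bot_of_field h2
    obtain ⟨y, hy⟩ := IsIntegrallyClosed.isIntegral_iff.mp h3
    have hy' : (y : ℚ) = 1 / 2 := by exact_mod_cast hy
    have : (2 * y : ℚ) = 1 := by rw [mul_comm, hy']; ring
    have : (2 * y : ℤ) = 1 := by exact_mod_cast this
    omega

/-- An infinite simple group is not isomorphic to any finitely generated linear group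
over a field. -/
theorem infinite_simple_not_fg_linear (G : Type*) [Group G] [Infinite G]
    (hG : IsSimpleGroup G) (k : Type) [Field k] (n : ℕ)
    (H : Subgroup (GL (Fin n) k)) (hH : Group.FG H) : ¬ Nonempty (G ≃* H) := by
  rintro ⟨e⟩
  obtain ⟨S, hSclos, hSfin⟩ := (Subgroup.fg_iff H).mp ((Group.fg_iff_subgroup_fg H).mp hH)
  -- a finitely generated subring (subalgebra over ℤ) containing all entries of the
  -- generators and of their inverses
  obtain ⟨A, hAft, hAmemS⟩ : ∃ A : Subalgebra ℤ k, Algebra.FiniteType ℤ A ∧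
      ∀ g ∈ S, (∀ i j, (g : Matrix (Fin n) (Fin n) k) i j ∈ A) ∧
        (∀ i j, ((g⁻¹ : GL (Fin n) k) : Matrix (Fin n) (Fin n) k) i j ∈ A) := by
    set E : Set k := ⋃ g ∈ S,
        (Set.range (fun p : Fin n × Fin n => (g : Matrix (Fin n) (Fin n) k) p.1 p.2) ∪
         Set.range (fun p : Fin n × Fin n =>
           ((g⁻¹ : GL (Fin n) k) : Matrix (Fin n) (Fin n) k) p.1 p.2)) with hE
    have hEfin : E.Finite :=
      hSfin.biUnion fun g _ => (Set.finite_range _).union (Set.finite_range _)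
    refine ⟨Algebra.adjoin ℤ E,
      (Subalgebra.fg_iff_finiteType _).mp (Subalgebra.fg_def.mpr ⟨E, hEfin, rfl⟩), ?_⟩
    intro g hg
    constructor <;> intro i j <;> apply Algebra.subset_adjoin
    · exact Set.mem_biUnion hg (Or.inl ⟨(i, j), rfl⟩)
    · exact Set.mem_biUnion hg (Or.inr ⟨(i, j), rfl⟩)
  haveI := hAft
  haveI : IsJacobsonRing A := isJacobsonRing_of_finiteType (A := ℤ)
  -- the subgroup of matrices with entries (and inverse entries) in A
  let K : Subgroup (GL (Fin n) k) :=
    { carrier := { g | (∀ i j, (g : Matrix (Fin n) (Fin n) k) i j ∈ A) ∧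
        (∀ i j, ((g⁻¹ : GL (Fin n) k) : Matrix (Fin n) (Fin n) k) i j ∈ A) }
      one_mem' := by
        constructor <;> intro i j <;>
          · simp only [inv_one, Units.val_one, Matrix.one_apply]
            split <;> [exact A.one_mem; exact A.zero_mem]
      mul_mem' := by
        rintro a b ⟨ha1, ha2⟩ ⟨hb1, hb2⟩
        constructor <;> intro i j
        · rw [Units.val_mul, Matrix.mul_apply]
          exact A.toSubring.sum_mem fun l _ => A.mul_mem (ha1 i l) (hb1 l j)
        · rw [mul_inv_rev, Units.val_mul, Matrix.mul_apply]
          exact A.toSubring.sum_mem fun l _ => A.mul_mem (hb2 i l) (ha2 l j)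
      inv_mem' := by
        rintro a ⟨ha1, ha2⟩
        refine ⟨ha2, ?_⟩
        simpa using ha1 }
  have hHK : H ≤ K := by
    rw [← hSclos]
    exact (Subgroup.closure_le K).mpr fun g hg => hAmemS g hg
  have hmemA : ∀ (g : H) (i j : Fin n),
      ((g : GL (Fin n) k) : Matrix (Fin n) (Fin n) k) i j ∈ A :=
    fun g i j => (hHK g.2).1 i j
  have h1A : ∀ i j : Fin n, (1 : Matrix (Fin n) (Fin n) k) i j ∈ A := by
    intro i j
    rw [Matrix.one_apply]
    split <;> [exact A.one_mem; exact A.zero_mem]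
  -- a nontrivial element of H
  haveI : Infinite H := Infinite.of_surjective ⇑e.symm e.symm.surjective
  obtain ⟨h, hne⟩ := exists_ne (1 : H)
  have hval : ((h : GL (Fin n) k) : Matrix (Fin n) (Fin n) k) ≠ 1 := by
    intro hc
    exact hne (Subtype.ext (Units.ext hc))
  obtain ⟨i, j, hij⟩ : ∃ i j, ((h : GL (Fin n) k) : Matrix (Fin n) (Fin n) k) i j
      ≠ (1 : Matrix (Fin n) (Fin n) k) i j := by
    by_contra hc
    push_neg at hc
    exact hval (by ext i j; exact hc i j)
  -- the element of A detecting nontriviality of h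
  set x : A := ⟨((h : GL (Fin n) k) : Matrix (Fin n) (Fin n) k) i j, hmemA h i j⟩ -
    ⟨(1 : Matrix (Fin n) (Fin n) k) i j, h1A i j⟩ with hx
  have hx0 : x ≠ 0 := by
    intro hc
    apply hij
    have := congrArg (Subtype.val) hc
    simpa [hx, sub_eq_zero] using this
  -- a finite field quotient of A in which x survives
  obtain ⟨F, _, _, π, hπx⟩ : ∃ (F : Type) (_ : Field F) (_ : Finite F) (π : A →+* F),
      π x ≠ 0 := by
    have hjac : (⊥ : Ideal A).jacobson = ⊥ := by
      rw [← Ideal.radical_eq_jacobson]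
      exact Ideal.radical_bot_of_noZeroDivisors
    have hnm : x ∉ (⊥ : Ideal A).jacobson := by rw [hjac]; simpa using hx0
    rw [Ideal.jacobson, Ideal.mem_sInf] at hnm
    push_neg at hnm
    obtain ⟨m, ⟨-, hmmax⟩, hxm⟩ := hnm
    haveI : m.IsMaximal := hmmax
    letI : Field (A ⧸ m) := Ideal.Quotient.field m
    haveI : Algebra.FiniteType ℤ (A ⧸ m) :=
      Algebra.FiniteType.of_surjective (Ideal.Quotient.mkₐ ℤ m)
        (Ideal.Quotient.mkₐ_surjective ℤ m)
    haveI : Module.Finite ℤ (A ⧸ m) := finite_of_finite_type_of_isJacobsonRing ℤ (A ⧸ m)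
    refine ⟨A ⧸ m, inferInstance, finite_of_field_moduleFinite (A ⧸ m),
      Ideal.Quotient.mk m, ?_⟩
    intro hc
    exact hxm (Ideal.Quotient.eq_zero_iff_mem.mp hc)
  haveI : Finite (GL (Fin n) F) := instFiniteUnits
  -- the reduction map on H
  let ψ : H → Matrix (Fin n) (Fin n) F := fun g i j =>
    π ⟨((g : GL (Fin n) k) : Matrix (Fin n) (Fin n) k) i j, hmemA g i j⟩
  have hψmul : ∀ a b : H, ψ (a * b) = ψ a * ψ b := by
    intro a b
    funext i j
    show π _ = _
    rw [Matrix.mul_apply]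
    have key : (⟨(((a * b : H) : GL (Fin n) k) : Matrix (Fin n) (Fin n) k) i j,
        hmemA (a * b) i j⟩ : A) =
        ∑ l, (⟨((a : GL (Fin n) k) : Matrix (Fin n) (Fin n) k) i l, hmemA a i l⟩ : A) *
          (⟨((b : GL (Fin n) k) : Matrix (Fin n) (Fin n) k) l j, hmemA b l j⟩ : A) := by
      ext
      push_cast
      simp [Matrix.mul_apply]
    rw [key, map_sum]
    exact Finset.sum_congr rfl fun l _ => map_mul _ _ _
  have hψone : ψ 1 = 1 := by
    funext i j
    show π _ = (1 : Matrix (Fin n) (Fin n) F) i j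
    rcases eq_or_ne i j with hd | hd
    · have h1 : (⟨(((1 : H) : GL (Fin n) k) : Matrix (Fin n) (Fin n) k) i j,
          hmemA 1 i j⟩ : A) = 1 := by
        ext; simp [Matrix.one_apply, hd]
      subst hd
      rw [h1, map_one, Matrix.one_apply_eq]
    · have h1 : (⟨(((1 : H) : GL (Fin n) k) : Matrix (Fin n) (Fin n) k) i j,
          hmemA 1 i j⟩ : A) = 0 := by
        ext; simp [Matrix.one_apply, hd]
      rw [h1, map_zero, Matrix.one_apply_ne hd]
  let Φ : H →* GL (Fin n) F :=
    { toFun := fun g => ⟨ψ g, ψ g⁻¹,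
        by rw [← hψmul, mul_inv_cancel, hψone],
        by rw [← hψmul, inv_mul_cancel, hψone]⟩
      map_one' := Units.ext (by simpa using hψone)
      map_mul' := fun a b => Units.ext (hψmul a b) }
  -- the kernel in G is a normal subgroup; use simplicity
  rcases hG.eq_bot_or_eq_top_of_normal (Φ.comp e.toMonoidHom).ker inferInstance with hbot | htop
  · -- G embeds into a finite group: contradiction
    have hinj : Function.Injective (Φ.comp e.toMonoidHom) :=
      (MonoidHom.ker_eq_bot_iff _).mp hbot
    haveI : Finite G := Finite.of_injective _ hinj
    exact not_finite G
  · -- h is in the kernel: contradiction with x ∉ m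
    have hmem : e.symm h ∈ (Φ.comp e.toMonoidHom).ker := htop ▸ Subgroup.mem_top _
    have hΦh : Φ h = 1 := by
      have h1 : Φ (e (e.symm h)) = 1 := hmem
      rwa [e.apply_symm_apply] at h1
    have hψh : ψ h = 1 := congrArg Units.val hΦh
    have hent := congrFun (congrFun hψh i) j
    apply hπx
    have key : π (⟨((h : GL (Fin n) k) : Matrix (Fin n) (Fin n) k) i j, hmemA h i j⟩ : A) =
        π (⟨(1 : Matrix (Fin n) (Fin n) k) i j, h1A i j⟩ : A) := by
      have hent' : π (⟨((h : GL (Fin n) k) : Matrix (Fin n) (Fin n) k) i j, hmemA h i j⟩ : A)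
          = (1 : Matrix (Fin n) (Fin n) F) i j := hent
      rw [hent']
      rcases eq_or_ne i j with hd | hd
      · have h1 : (⟨(1 : Matrix (Fin n) (Fin n) k) i j, h1A i j⟩ : A) = 1 := by
          ext; simp [Matrix.one_apply, hd]
        subst hd
        rw [h1, map_one, Matrix.one_apply_eq]
      · have h1 : (⟨(1 : Matrix (Fin n) (Fin n) k) i j, h1A i j⟩ : A) = 0 := by
          ext; simp [Matrix.one_apply, hd]
        rw [h1, map_zero, Matrix.one_apply_ne hd]
    rw [hx, map_sub, key, sub_self]
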